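/- Let f be a function on tuples of square matrices of all sizes that respects direct sums (f(X⊕Y) = f(X)⊕f(Y)) and similarity (f(S⁻¹XS) = S⁻¹f(X)S for all invertible S). Then f respects all intertwiners: if XΓ = ΓY entrywise for a rectangular matrix Γ, then f(X)Γ = Γf(Y). -/

import Mathlib

open Matrix

/-- A family of maps on tuples of square matrices of all sizes that respects
direct sums and similarity respects all intertwiners. -/
theorem respects_sums_and_similarity_implies_free {K : Type*} [Field K] {d : ℕ}
    (f : ∀ n : ℕ, (Fin d → Matrix (Fin n) (Fin n) K) → Matrix (Fin n) (Fin n) K)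
    (hsum : ∀ (n m : ℕ) (X : Fin d → Matrix (Fin n) (Fin n) K)
      (Y : Fin d → Matrix (Fin m) (Fin m) K),
      f (n + m) (fun i => Matrix.reindex finSumFinEquiv finSumFinEquiv
          (Matrix.fromBlocks (X i) 0 0 (Y i))) =
        Matrix.reindex finSumFinEquiv finSumFinEquiv
          (Matrix.fromBlocks (f n X) 0 0 (f m Y)))
    (hsim : ∀ (n : ℕ) (X : Fin d → Matrix (Fin n) (Fin n) K)
      (S : Matrix (Fin n) (Fin n) K), IsUnit S →
      f n (fun i => S⁻¹ * X i * S) = S⁻¹ * f n X * S) :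
    ∀ (n m : ℕ) (X : Fin d → Matrix (Fin n) (Fin n) K)
      (Y : Fin d → Matrix (Fin m) (Fin m) K) (Γ : Matrix (Fin n) (Fin m) K),
      (∀ i, X i * Γ = Γ * Y i) → f n X * Γ = Γ * f m Y := by
  intro n m X Y Γ h
  set R := Matrix.reindexAlgEquiv K K (finSumFinEquiv : Fin n ⊕ Fin m ≃ Fin (n + m)) with hR
  set S₀ : Matrix (Fin n ⊕ Fin m) (Fin n ⊕ Fin m) K := Matrix.fromBlocks 1 Γ 0 1 with hS₀
  set T₀ : Matrix (Fin n ⊕ Fin m) (Fin n ⊕ Fin m) K := Matrix.fromBlocks 1 (-Γ) 0 1 with hT₀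
  have hST : S₀ * T₀ = 1 := by
    simp [hS₀, hT₀, Matrix.fromBlocks_multiply, ← Matrix.fromBlocks_one]
  have hTS : T₀ * S₀ = 1 := by
    simp [hS₀, hT₀, Matrix.fromBlocks_multiply, ← Matrix.fromBlocks_one]
  set S : Matrix (Fin (n + m)) (Fin (n + m)) K := R S₀ with hS
  have hSinv : S⁻¹ = R T₀ := by
    apply Matrix.inv_eq_right_inv
    rw [hS, ← _root_.map_mul, hST, _root_.map_one]
  have hSunit : IsUnit S := by
    refine ⟨⟨S, R T₀, ?_, ?_⟩, rfl⟩
    · rw [hS, ← _root_.map_mul, hST, _root_.map_one]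
    · rw [hS, ← _root_.map_mul, hTS, _root_.map_one]
  have hconj : (fun i => S⁻¹ * (R (Matrix.fromBlocks (X i) 0 0 (Y i))) * S)
      = fun i => R (Matrix.fromBlocks (X i) 0 0 (Y i)) := by
    funext i
    rw [hSinv, hS, ← _root_.map_mul, ← _root_.map_mul]
    congr 1
    simp [hT₀, hS₀, Matrix.fromBlocks_multiply, h i]
  have key := hsim (n + m) (fun i => R (Matrix.fromBlocks (X i) 0 0 (Y i))) S hSunit
  rw [hconj] at key
  have hfsum : f (n + m) (fun i => R (Matrix.fromBlocks (X i) 0 0 (Y i)))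
      = R (Matrix.fromBlocks (f n X) 0 0 (f m Y)) := by
    simpa [hR, Matrix.reindexAlgEquiv_apply] using hsum n m X Y
  rw [hfsum, hSinv, hS, ← _root_.map_mul, ← _root_.map_mul] at key
  have key2 : Matrix.fromBlocks (f n X) 0 0 (f m Y)
      = T₀ * Matrix.fromBlocks (f n X) 0 0 (f m Y) * S₀ := R.injective key
  have key3 : S₀ * Matrix.fromBlocks (f n X) 0 0 (f m Y)
      = Matrix.fromBlocks (f n X) 0 0 (f m Y) * S₀ := by
    calc S₀ * Matrix.fromBlocks (f n X) 0 0 (f m Y)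
        = S₀ * (T₀ * Matrix.fromBlocks (f n X) 0 0 (f m Y) * S₀) := by rw [← key2]
      _ = (S₀ * T₀) * Matrix.fromBlocks (f n X) 0 0 (f m Y) * S₀ := by rw [← mul_assoc, ← mul_assoc]
      _ = Matrix.fromBlocks (f n X) 0 0 (f m Y) * S₀ := by rw [hST, one_mul]
  rw [hS₀] at key3
  simp only [Matrix.fromBlocks_multiply, Matrix.mul_one, Matrix.one_mul, mul_zero, zero_mul,
    add_zero, zero_add, Matrix.mul_zero, Matrix.zero_mul] at key3
  have := (Matrix.fromBlocks_inj.mp key3)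
  exact this.2.1.symm
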